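/- Let d ≥ 2 and for 1 ≤ i ≤ d+1 let V_i = {v_{i,j} : 1 ≤ j ≤ d} be a collection of d+1 pairwise mutually unbiased orthonormal bases of ℂ^d, and set P_{i,j} = v_{i,j} v_{i,j}*. Then the set of d² matrices {P_{1,j} : 1 ≤ j ≤ d} ∪ {P_{i,j} : 2 ≤ i ≤ d+1, 1 ≤ j ≤ d−1} is a basis of M_d(ℂ). -/

import Mathlib

open Matrix

/-- The rank-one matrix `x y*` with entries `(x y*)_{k,l} = x_k * conj (y_l)`. -/
noncomputable def outer {d : ℕ} (x y : Fin d → ℂ) : Matrix (Fin d) (Fin d) ℂ :=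
  fun k l => x k * (starRingEnd ℂ) (y l)

/-- Given `d+1` bases `v i = {v i j : j}` of `ℂ^d` with associated rank-one projections
`P_{i,j} = v_{i,j} v_{i,j}*`, the family of `d²` matrices
`{P_{1,j} : 1 ≤ j ≤ d} ∪ {P_{i,j} : 2 ≤ i ≤ d+1, 1 ≤ j ≤ d-1}`
(here the first basis is indexed by `0 : Fin (d+1)`). -/
noncomputable def mubFamily {d : ℕ} (v : Fin (d + 1) → Fin d → EuclideanSpace ℂ (Fin d)) :
    (Fin d ⊕ ({i : Fin (d + 1) // i ≠ 0} × Fin (d - 1))) → Matrix (Fin d) (Fin d) ℂ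
  | Sum.inl j => outer (v 0 j) (v 0 j)
  | Sum.inr (i, j) =>
      outer (v i.1 (Fin.castLE (Nat.sub_le d 1) j)) (v i.1 (Fin.castLE (Nat.sub_le d 1) j))

lemma mubFamily_inl {d : ℕ} (v : Fin (d + 1) → Fin d → EuclideanSpace ℂ (Fin d)) (j : Fin d) :
    mubFamily v (Sum.inl j) = outer (v 0 j) (v 0 j) := rfl

lemma mubFamily_inr {d : ℕ} (v : Fin (d + 1) → Fin d → EuclideanSpace ℂ (Fin d))
    (i : {i : Fin (d + 1) // i ≠ 0}) (j : Fin (d - 1)) :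
    mubFamily v (Sum.inr (i, j)) =
      outer (v i.1 (Fin.castLE (Nat.sub_le d 1) j)) (v i.1 (Fin.castLE (Nat.sub_le d 1) j)) := rfl

lemma trace_outer_outer {d : ℕ} (x y : EuclideanSpace ℂ (Fin d)) :
    Matrix.trace (outer x x * outer y y) =
      (starRingEnd ℂ) (inner ℂ x y : ℂ) * (inner ℂ x y : ℂ) := by
  simp only [Matrix.trace, Matrix.diag, Matrix.mul_apply, outer, PiLp.inner_apply,
    RCLike.inner_apply, map_sum, _root_.map_mul, Finset.sum_mul_sum, Complex.conj_conj]
  refine Finset.sum_congr rfl fun k _ => Finset.sum_congr rfl fun l _ => by ring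

lemma pairing {d : ℕ} (v : Fin (d + 1) → Fin d → EuclideanSpace ℂ (Fin d))
    (horth : ∀ i, Orthonormal ℂ (v i))
    (hmub : ∀ i k, i ≠ k → ∀ j l, ‖(inner ℂ (v i j) (v k l) : ℂ)‖ ^ 2 = 1 / d)
    (i k : Fin (d + 1)) (j l : Fin d) :
    Matrix.trace (outer (v i j) (v i j) * outer (v k l) (v k l)) =
      if i = k then (if j = l then (1 : ℂ) else 0) else (1 / d : ℂ) := by
  rw [trace_outer_outer]
  by_cases h : i = k
  · subst h
    rw [orthonormal_iff_ite.mp (horth i) j l, if_pos rfl]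
    by_cases hjl : j = l <;> simp [hjl]
  · rw [if_neg h, RCLike.conj_mul, ← RCLike.ofReal_pow, hmub i k h j l]
    push_cast
    ring

theorem mub_projections_basis {d : ℕ} (hd : 2 ≤ d)
    (v : Fin (d + 1) → Fin d → EuclideanSpace ℂ (Fin d))
    (horth : ∀ i, Orthonormal ℂ (v i))
    (hmub : ∀ i k, i ≠ k → ∀ j l, ‖(inner ℂ (v i j) (v k l) : ℂ)‖ ^ 2 = 1 / d) :
    LinearIndependent ℂ (mubFamily v) ∧
    Submodule.span ℂ (Set.range (mubFamily v)) = ⊤ := by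
  have hd0 : (d : ℂ) ≠ 0 := Nat.cast_ne_zero.mpr (by omega)
  have hli : LinearIndependent ℂ (mubFamily v) := by
    rw [Fintype.linearIndependent_iff]
    intro g hg
    -- pairing with an arbitrary matrix P
    have hpair : ∀ P : Matrix (Fin d) (Fin d) ℂ,
        ∑ x, g x * Matrix.trace (mubFamily v x * P) = 0 := by
      intro P
      have h := congrArg (fun M => Matrix.trace (M * P)) hg
      simpa [Matrix.sum_mul, Matrix.add_mul, Matrix.smul_mul, Matrix.trace_sum, Matrix.trace_add,
        Matrix.trace_smul, smul_eq_mul, Matrix.zero_mul, Matrix.trace_zero] using h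
    have key : ∀ (k : Fin (d + 1)) (l : Fin d),
        (∑ j : Fin d, g (Sum.inl j) *
            (if (0 : Fin (d + 1)) = k then (if j = l then (1 : ℂ) else 0) else 1 / d)) +
        (∑ i : {i : Fin (d + 1) // i ≠ 0}, ∑ j : Fin (d - 1), g (Sum.inr (i, j)) *
            (if i.1 = k then (if Fin.castLE (Nat.sub_le d 1) j = l then (1 : ℂ) else 0)
              else 1 / d)) = 0 := by
      intro k l
      have h := hpair (outer (v k l) (v k l))
      rw [Fintype.sum_sum_type, Fintype.sum_prod_type] at h
      have ha : ∑ j : Fin d, g (Sum.inl j) * Matrix.trace (mubFamily v (Sum.inl j) *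
            outer (v k l) (v k l)) =
          ∑ j : Fin d, g (Sum.inl j) *
            (if (0 : Fin (d + 1)) = k then (if j = l then (1 : ℂ) else 0) else 1 / d) :=
        Finset.sum_congr rfl fun j _ => by rw [mubFamily_inl, pairing v horth hmub]
      have hb : ∑ i : {i : Fin (d + 1) // i ≠ 0}, ∑ j : Fin (d - 1),
            g (Sum.inr (i, j)) * Matrix.trace (mubFamily v (Sum.inr (i, j)) *
              outer (v k l) (v k l)) =
          ∑ i : {i : Fin (d + 1) // i ≠ 0}, ∑ j : Fin (d - 1), g (Sum.inr (i, j)) *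
            (if i.1 = k then (if Fin.castLE (Nat.sub_le d 1) j = l then (1 : ℂ) else 0)
              else 1 / d) :=
        Finset.sum_congr rfl fun i _ => Finset.sum_congr rfl fun j _ => by
          rw [mubFamily_inr, pairing v horth hmub]
      linear_combination h - ha - hb
    -- e1 : equations from pairing with the first basis
    have e1 : ∀ l : Fin d, g (Sum.inl l) +
        (∑ i : {i : Fin (d + 1) // i ≠ 0}, ∑ j : Fin (d - 1), g (Sum.inr (i, j))) * (1 / d) = 0 := by
      intro l
      have h := key 0 l
      have h1 : (∑ j : Fin d, g (Sum.inl j) *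
          (if (0 : Fin (d + 1)) = 0 then (if j = l then (1 : ℂ) else 0) else 1 / d)) =
          g (Sum.inl l) := by
        simp [mul_ite, Finset.sum_ite_eq']
      have h2 : (∑ i : {i : Fin (d + 1) // i ≠ 0}, ∑ j : Fin (d - 1), g (Sum.inr (i, j)) *
          (if i.1 = (0 : Fin (d + 1)) then
            (if Fin.castLE (Nat.sub_le d 1) j = l then (1 : ℂ) else 0) else 1 / d)) =
          (∑ i : {i : Fin (d + 1) // i ≠ 0}, ∑ j : Fin (d - 1), g (Sum.inr (i, j))) * (1 / d) := by
        rw [Finset.sum_mul]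
        refine Finset.sum_congr rfl fun i _ => ?_
        rw [Finset.sum_mul]
        exact Finset.sum_congr rfl fun j _ => by rw [if_neg i.2]
      linear_combination h - h1 - h2
    -- e2 : equations from pairing with the other bases
    have e2 : ∀ (k : {i : Fin (d + 1) // i ≠ 0}) (l : Fin (d - 1)),
        (∑ j : Fin d, g (Sum.inl j)) * (1 / d) + (g (Sum.inr (k, l)) +
          ((∑ i : {i : Fin (d + 1) // i ≠ 0}, ∑ j : Fin (d - 1), g (Sum.inr (i, j))) -
            (∑ j : Fin (d - 1), g (Sum.inr (k, j)))) * (1 / d)) = 0 := by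
      intro k l
      have h := key k.1 (Fin.castLE (Nat.sub_le d 1) l)
      have h1 : (∑ j : Fin d, g (Sum.inl j) *
          (if (0 : Fin (d + 1)) = k.1 then
            (if j = Fin.castLE (Nat.sub_le d 1) l then (1 : ℂ) else 0) else 1 / d)) =
          (∑ j : Fin d, g (Sum.inl j)) * (1 / d) := by
        rw [Finset.sum_mul]
        exact Finset.sum_congr rfl fun j _ => by rw [if_neg (Ne.symm k.2)]
      have h2 : (∑ i : {i : Fin (d + 1) // i ≠ 0}, ∑ j : Fin (d - 1), g (Sum.inr (i, j)) *
          (if i.1 = k.1 then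
            (if Fin.castLE (Nat.sub_le d 1) j = Fin.castLE (Nat.sub_le d 1) l then (1 : ℂ) else 0)
            else 1 / d)) = g (Sum.inr (k, l)) +
          ((∑ i : {i : Fin (d + 1) // i ≠ 0}, ∑ j : Fin (d - 1), g (Sum.inr (i, j))) -
            (∑ j : Fin (d - 1), g (Sum.inr (k, j)))) * (1 / d) := by
        have hinner : ∀ i : {i : Fin (d + 1) // i ≠ 0},
            (∑ j : Fin (d - 1), g (Sum.inr (i, j)) *
              (if i.1 = k.1 then
                (if Fin.castLE (Nat.sub_le d 1) j = Fin.castLE (Nat.sub_le d 1) l then (1 : ℂ)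
                  else 0) else 1 / d)) =
            if i = k then g (Sum.inr (k, l))
              else (∑ j : Fin (d - 1), g (Sum.inr (i, j))) * (1 / d) := by
          intro i
          by_cases hik : i = k
          · subst hik
            rw [if_pos rfl]
            have hterm : ∀ j : Fin (d - 1), (g (Sum.inr (i, j)) *
                (if i.1 = i.1 then
                  (if Fin.castLE (Nat.sub_le d 1) j = Fin.castLE (Nat.sub_le d 1) l then (1 : ℂ)
                    else 0) else 1 / d)) = if j = l then g (Sum.inr (i, j)) else 0 := by
              intro j
              by_cases hjl : j = l
              · simp [hjl]
              · simp [hjl, Fin.castLE_inj]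
            rw [Finset.sum_congr rfl fun j _ => hterm j, Finset.sum_ite_eq']
            simp
          · rw [if_neg hik, Finset.sum_mul]
            refine Finset.sum_congr rfl fun j _ => ?_
            rw [if_neg (fun hv => hik (Subtype.ext hv))]
        rw [Finset.sum_congr rfl fun i _ => hinner i]
        rw [← Finset.add_sum_erase Finset.univ _ (Finset.mem_univ k), if_pos rfl]
        congr 1
        rw [Finset.sum_congr rfl (fun i hi => if_neg (Finset.ne_of_mem_erase hi)),
          ← Finset.sum_mul, Finset.sum_erase_eq_sub (Finset.mem_univ k)]
      linear_combination h - h1 - h2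
    -- now solve the linear system
    have hAS : (∑ j : Fin d, g (Sum.inl j)) +
        (∑ i : {i : Fin (d + 1) // i ≠ 0}, ∑ j : Fin (d - 1), g (Sum.inr (i, j))) = 0 := by
      have h : ∑ l : Fin d, (g (Sum.inl l) +
          (∑ i : {i : Fin (d + 1) // i ≠ 0}, ∑ j : Fin (d - 1), g (Sum.inr (i, j))) * (1 / d)) =
          0 := Finset.sum_eq_zero fun l _ => e1 l
      rw [Finset.sum_add_distrib, Finset.sum_const, Finset.card_univ, Fintype.card_fin,
        nsmul_eq_mul] at h
      have hD : (d : ℂ) * ((∑ i : {i : Fin (d + 1) // i ≠ 0},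
            ∑ j : Fin (d - 1), g (Sum.inr (i, j))) * (1 / d)) =
          ∑ i : {i : Fin (d + 1) // i ≠ 0}, ∑ j : Fin (d - 1), g (Sum.inr (i, j)) := by
        field_simp
      linear_combination h - hD
    have hBk0 : ∀ k : {i : Fin (d + 1) // i ≠ 0},
        (∑ j : Fin (d - 1), g (Sum.inr (k, j))) = 0 := by
      intro k
      have hval : ∀ l : Fin (d - 1), g (Sum.inr (k, l)) =
          ((∑ j : Fin (d - 1), g (Sum.inr (k, j))) - (∑ j : Fin d, g (Sum.inl j)) -
            (∑ i : {i : Fin (d + 1) // i ≠ 0}, ∑ j : Fin (d - 1), g (Sum.inr (i, j)))) * (1 / d) :=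
        fun l => by linear_combination e2 k l
      have hsum : (∑ j : Fin (d - 1), g (Sum.inr (k, j))) = ((d - 1 : ℕ) : ℂ) *
          (((∑ j : Fin (d - 1), g (Sum.inr (k, j))) - (∑ j : Fin d, g (Sum.inl j)) -
            (∑ i : {i : Fin (d + 1) // i ≠ 0}, ∑ j : Fin (d - 1), g (Sum.inr (i, j)))) *
              (1 / d)) := by
        conv_lhs => rw [Finset.sum_congr rfl fun l _ => hval l]
        rw [Finset.sum_const, Finset.card_univ, Fintype.card_fin, nsmul_eq_mul]
      have hcast : ((d - 1 : ℕ) : ℂ) = (d : ℂ) - 1 := by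
        rw [Nat.cast_sub (by omega : 1 ≤ d)]; norm_num
      rw [hcast] at hsum
      have hdd : (d : ℂ) * (1 / d) = 1 := by field_simp
      have hmul : (d : ℂ) * (∑ j : Fin (d - 1), g (Sum.inr (k, j))) =
          ((d : ℂ) - 1) * ((∑ j : Fin (d - 1), g (Sum.inr (k, j))) -
            (∑ j : Fin d, g (Sum.inl j)) -
            (∑ i : {i : Fin (d + 1) // i ≠ 0}, ∑ j : Fin (d - 1), g (Sum.inr (i, j)))) := by
        linear_combination (d : ℂ) * hsum + ((d : ℂ) - 1) *
          ((∑ j : Fin (d - 1), g (Sum.inr (k, j))) - (∑ j : Fin d, g (Sum.inl j)) -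
            (∑ i : {i : Fin (d + 1) // i ≠ 0}, ∑ j : Fin (d - 1), g (Sum.inr (i, j)))) * hdd
      linear_combination hmul - ((d : ℂ) - 1) * hAS
    have hS : (∑ i : {i : Fin (d + 1) // i ≠ 0}, ∑ j : Fin (d - 1), g (Sum.inr (i, j))) = 0 := by
      rw [Finset.sum_congr rfl fun i _ => hBk0 i, Finset.sum_const, smul_zero]
    have hginr : ∀ (k : {i : Fin (d + 1) // i ≠ 0}) (l : Fin (d - 1)),
        g (Sum.inr (k, l)) = 0 := by
      intro k l
      linear_combination e2 k l - (1 / (d : ℂ)) * hAS + (1 / (d : ℂ)) * hBk0 k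
    intro x
    obtain (j | ⟨i, j⟩) := x
    · linear_combination e1 j - (1 / (d : ℂ)) * hS
    · exact hginr i j
  refine ⟨hli, ?_⟩
  haveI : Nonempty (Fin d) := ⟨⟨0, by omega⟩⟩
  apply hli.span_eq_top_of_card_eq_finrank
  have hcards : Fintype.card {i : Fin (d + 1) // i ≠ 0} = d := by
    simp [Fintype.card_subtype_compl]
  rw [Fintype.card_sum, Fintype.card_prod, hcards, Fintype.card_fin, Fintype.card_fin,
    Module.finrank_matrix]
  simp only [Fintype.card_fin, Module.finrank_self, mul_one]
  obtain ⟨e, rfl⟩ : ∃ e, d = e + 1 := ⟨d - 1, by omega⟩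
  simp only [Nat.add_sub_cancel]
  ring
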